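/- Let N ≥ 2, let Λ = diag(λ_0, λ_1, …, λ_{N−1}) be a real diagonal N×N matrix, let α, β be real numbers with α² + β² = 1, let p = (α, 0, …, 0, β)ᵀ ∈ ℝ^N, and let ξ ∈ ℝ. Then the multiset of eigenvalues of the Hermitian matrix Θ = Λ − ξ p pᴴ consists of λ_1, λ_2, …, λ_{N−2} together with the two roots of the quadratic equation x² − (λ_0 + λ_{N−1} − ξ)x + λ_0 λ_{N−1} − ξ(α² λ_{N−1} + β² λ_0) = 0. -/

import Mathlib

open Matrix
open scoped ComplexOrder

noncomputable section

open Polynomial in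
lemma my_charpoly_diagonal {n : Type*} [Fintype n] [DecidableEq n] {R : Type*} [CommRing R]
    (d : n → R) : (Matrix.diagonal d).charpoly = ∏ i, (X - C (d i)) := by
  have h : (Matrix.diagonal d).charmatrix = Matrix.diagonal (fun i => X - C (d i)) := by
    ext i j
    by_cases hij : i = j
    · subst hij; simp
    · simp [Matrix.charmatrix_apply_ne _ _ _ hij, Matrix.diagonal_apply_ne _ hij]
  rw [Matrix.charpoly, h, Matrix.det_diagonal]

open Polynomial in
lemma my_charpoly_unitary_conj {n : Type*} [Fintype n] [DecidableEq n]
    (U : Matrix.unitaryGroup n ℂ) (A : Matrix n n ℂ) :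
    ((U : Matrix n n ℂ) * A * star (U : Matrix n n ℂ)).charpoly = A.charpoly := by
  set f : Matrix n n ℂ →+* Matrix n n ℂ[X] := (Polynomial.C : ℂ →+* ℂ[X]).mapMatrix with hf
  have hUV : f U * f (star (U : Matrix n n ℂ)) = 1 := by
    rw [← _root_.map_mul, U.2.2, _root_.map_one]
  have hcomm : f (U : Matrix n n ℂ) * Matrix.scalar n (X : ℂ[X]) =
      Matrix.scalar n (X : ℂ[X]) * f (U : Matrix n n ℂ) :=
    (Matrix.scalar_commute (X : ℂ[X]) (fun r => Commute.all _ _) _).symm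
  have hch : Matrix.charmatrix ((U : Matrix n n ℂ) * A * star (U : Matrix n n ℂ)) =
      f U * Matrix.charmatrix A * f (star (U : Matrix n n ℂ)) := by
    rw [Matrix.charmatrix, Matrix.charmatrix, mul_sub, sub_mul]
    congr 1
    · rw [hcomm, mul_assoc, hUV, mul_one]
    · simp only [hf, _root_.map_mul]
  rw [Matrix.charpoly, hch, Matrix.det_mul, Matrix.det_mul, Matrix.charpoly]
  have h1 : (f U).det * (f (star (U : Matrix n n ℂ))).det = 1 := by
    rw [← Matrix.det_mul, hUV, Matrix.det_one]
  calc (f U).det * A.charmatrix.det * (f (star (U : Matrix n n ℂ))).det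
      = ((f U).det * (f (star (U : Matrix n n ℂ))).det) * A.charmatrix.det := by ring
    _ = A.charmatrix.det := by rw [h1, one_mul]

/-- For `Λ = diag(λ₀, …, λ_{N-1})`, `p = (α, 0, …, 0, β)ᵀ` with `α² + β² = 1`, the
eigenvalues of `Θ = Λ - ξ p pᴴ` (as a multiset) are `λ₁, …, λ_{N-2}` together with the
two roots (characterized via Vieta's formulas) of
`x² - (λ₀ + λ_{N-1} - ξ) x + λ₀ λ_{N-1} - ξ(α² λ_{N-1} + β² λ₀) = 0`. -/
theorem sr1r_diagonal_spectrum {N : ℕ} (hN : 2 ≤ N)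
    (lam : Fin N → ℝ) (α β : ℝ) (hαβ : α ^ 2 + β ^ 2 = 1)
    (p : Fin N → ℂ)
    (hp : p = fun i : Fin N =>
      if (i : ℕ) = 0 then (α : ℂ) else if (i : ℕ) = N - 1 then (β : ℂ) else 0)
    (ξ : ℝ)
    (Θ : Matrix (Fin N) (Fin N) ℂ)
    (hΘdef : Θ = Matrix.diagonal (fun i => (lam i : ℂ)) - (ξ : ℂ) • vecMulVec p (star p))
    (hΘ : Θ.IsHermitian) :
    ∃ r₁ r₂ : ℝ,
      r₁ + r₂ = lam ⟨0, by omega⟩ + lam ⟨N - 1, by omega⟩ - ξ ∧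
      r₁ * r₂ = lam ⟨0, by omega⟩ * lam ⟨N - 1, by omega⟩ -
        ξ * (α ^ 2 * lam ⟨N - 1, by omega⟩ + β ^ 2 * lam ⟨0, by omega⟩) ∧
      Multiset.map hΘ.eigenvalues Finset.univ.val =
        r₁ ::ₘ r₂ ::ₘ Multiset.map lam
          ((Finset.univ.filter fun i : Fin N => 0 < (i : ℕ) ∧ (i : ℕ) < N - 1)).val := by
  classical
  have h0N : (0:ℕ) < N := by omega
  have hN1 : N - 1 < N := by omega
  set i0 : Fin N := ⟨0, h0N⟩ with hi0
  set i1 : Fin N := ⟨N - 1, hN1⟩ with hi1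
  have hi01 : i0 ≠ i1 := by
    simp only [hi0, hi1, ne_eq, Fin.mk.injEq]; omega
  set a : ℝ := lam i0 - ξ * α ^ 2 with ha
  set d : ℝ := lam i1 - ξ * β ^ 2 with hd
  set b : ℝ := ξ * α * β with hb
  have hdisc : (0:ℝ) ≤ (a - d) ^ 2 + 4 * b ^ 2 := by positivity
  set s : ℝ := Real.sqrt ((a - d) ^ 2 + 4 * b ^ 2) with hs
  have hs2 : s ^ 2 = (a - d) ^ 2 + 4 * b ^ 2 := Real.sq_sqrt hdisc
  have hsumad : a + d = lam i0 + lam i1 - ξ := by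
    rw [ha, hd]; linear_combination (-ξ) * hαβ
  have hprodad : a * d - b ^ 2 =
      lam i0 * lam i1 - ξ * (α ^ 2 * lam i1 + β ^ 2 * lam i0) := by
    rw [ha, hd, hb]; ring
  refine ⟨(a + d + s) / 2, (a + d - s) / 2, ?_, ?_, ?_⟩
  · calc (a + d + s) / 2 + (a + d - s) / 2 = a + d := by ring
      _ = _ := hsumad
  · calc (a + d + s) / 2 * ((a + d - s) / 2) = ((a + d) ^ 2 - s ^ 2) / 4 := by ring
      _ = a * d - b ^ 2 := by rw [hs2]; ring
      _ = _ := hprodad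
  · set r₁ : ℝ := (a + d + s) / 2 with hr₁
    set r₂ : ℝ := (a + d - s) / 2 with hr₂
    have hr₁₂sum : r₁ + r₂ = a + d := by rw [hr₁, hr₂]; ring
    have hr₁₂prod : r₁ * r₂ = a * d - b ^ 2 := by
      calc r₁ * r₂ = ((a + d) ^ 2 - s ^ 2) / 4 := by rw [hr₁, hr₂]; ring
        _ = a * d - b ^ 2 := by rw [hs2]; ring
    -- the embedding of interior indices
    have hgk : ∀ k : Fin (N - 2), (k : ℕ) + 1 < N := fun k => by have := k.2; omega
    set g : Fin (N - 2) → Fin N := fun k => ⟨(k : ℕ) + 1, hgk k⟩ with hgdef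
    have ginj : Function.Injective g := by
      intro k l hkl
      apply Fin.ext
      have : ((g k : Fin N) : ℕ) = ((g l : Fin N) : ℕ) := by rw [hkl]
      simpa [hgdef] using this
    -- values of p
    have hp0 : p i0 = (α : ℂ) := by rw [hp]; simp [hi0]
    have hp1 : p i1 = (β : ℂ) := by
      rw [hp]
      have h1 : (N - 1 : ℕ) ≠ 0 := by omega
      simp [hi1, h1]
    have hpg : ∀ k, p (g k) = 0 := by
      intro k
      rw [hp]
      have h1 : (k : ℕ) + 1 ≠ 0 := by omega
      have h2 : (k : ℕ) + 1 ≠ N - 1 := by have := k.2; omega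
      simp [hgdef, h1, h2]
    have hΘa : ∀ i j, Θ i j =
        (if i = j then (lam i : ℂ) else 0) - (ξ : ℂ) * (p i * star (p j)) := by
      intro i j
      rw [hΘdef]
      simp [Matrix.sub_apply, Matrix.diagonal_apply, Matrix.vecMulVec_apply, Pi.star_apply,
        mul_comm]
    -- the equivalence
    set fsum : Fin 2 ⊕ Fin (N - 2) → Fin N := Sum.elim ![i0, i1] g with hfsum
    have hfl0 : fsum (Sum.inl 0) = i0 := rfl
    have hfl1 : fsum (Sum.inl 1) = i1 := rfl
    have hflr : ∀ k, fsum (Sum.inr k) = g k := fun k => rfl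
    have hvalinl : ∀ u : Fin 2, ((fsum (Sum.inl u)) : ℕ) = if (u : ℕ) = 0 then 0 else N - 1 := by
      intro u
      fin_cases u <;> rfl
    have hvalinr : ∀ k : Fin (N - 2), ((fsum (Sum.inr k)) : ℕ) = (k : ℕ) + 1 := fun k => rfl
    have hfbij : Function.Bijective fsum := by
      constructor
      · rintro (u | k) (v | l) h
        · have hv := congrArg Fin.val h
          rw [hvalinl, hvalinl] at hv
          have hu2 := u.2
          have hv2 := v.2
          have huv : (u : ℕ) = (v : ℕ) := by split_ifs at hv <;> omega
          exact congrArg Sum.inl (Fin.ext huv)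
        · have hv := congrArg Fin.val h
          rw [hvalinl, hvalinr] at hv
          have hl2 := l.2
          exfalso
          split_ifs at hv <;> omega
        · have hv := congrArg Fin.val h
          rw [hvalinr, hvalinl] at hv
          have hk2 := k.2
          exfalso
          split_ifs at hv <;> omega
        · exact congrArg Sum.inr (ginj h)
      · intro i
        rcases Nat.lt_trichotomy (i : ℕ) (N-1) with hlt | heq | hgt
        · rcases Nat.eq_zero_or_pos (i : ℕ) with h0 | hpos
          · exact ⟨Sum.inl 0, by rw [hfl0]; exact Fin.ext h0.symm⟩
          · refine ⟨Sum.inr ⟨(i : ℕ) - 1, by omega⟩, ?_⟩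
            rw [hflr]
            apply Fin.ext
            simp only [hgdef]
            omega
        · exact ⟨Sum.inl 1, by rw [hfl1]; exact Fin.ext heq.symm⟩
        · exact absurd i.2 (by omega)
    set e : (Fin 2 ⊕ Fin (N - 2)) ≃ Fin N := Equiv.ofBijective fsum hfbij with he
    have heapp : ∀ x, e x = fsum x := fun x => rfl
    -- the 2x2 corner block
    set A2 : Matrix (Fin 2) (Fin 2) ℂ := !![(a : ℂ), (-b : ℝ); (-b : ℝ), (d : ℂ)] with hA2def
    have hA200 : A2 0 0 = ((a : ℝ) : ℂ) := rfl
    have hA201 : A2 0 1 = ((-b : ℝ) : ℂ) := rfl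
    have hA210 : A2 1 0 = ((-b : ℝ) : ℂ) := rfl
    have hA211 : A2 1 1 = ((d : ℝ) : ℂ) := rfl
    have hstar : ∀ r : ℝ, star ((r : ℝ) : ℂ) = ((r : ℝ) : ℂ) := by
      intro r; rw [Complex.star_def, Complex.conj_ofReal]
    have hre : (Matrix.reindex e.symm e.symm Θ) =
        Matrix.fromBlocks A2 0 0 (Matrix.diagonal (fun k => (lam (g k) : ℂ))) := by
      ext x y
      have hentry : (Matrix.reindex e.symm e.symm Θ) x y = Θ (fsum x) (fsum y) := rfl
      rw [hentry, hΘa]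
      rcases x with u | k
      · rcases y with v | l
        · rw [Matrix.fromBlocks_apply₁₁]
          fin_cases u <;> fin_cases v <;>
            simp only [Fin.mk_zero, Fin.mk_one, Fin.zero_eta, Fin.isValue, hfl0, hfl1,
              eq_self_iff_true, if_true]
          · rw [hp0, hA200, hstar, ha]
            push_cast
            ring
          · rw [if_neg hi01, hp0, hp1, hA201, hstar, hb]
            push_cast
            ring
          · rw [if_neg (Ne.symm hi01), hp0, hp1, hA210, hstar, hb]
            push_cast
            ring
          · rw [hp1, hA211, hstar, hd]
            push_cast
            ring
        · have hne : fsum (Sum.inl u) ≠ fsum (Sum.inr l) := fun h =>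
            Sum.inl_ne_inr (hfbij.1 h)
          rw [hflr] at hne ⊢
          rw [if_neg hne, hpg, star_zero, mul_zero, mul_zero, sub_zero,
            Matrix.fromBlocks_apply₁₂, Matrix.zero_apply]
      · rcases y with v | l
        · have hne : fsum (Sum.inr k) ≠ fsum (Sum.inl v) := fun h =>
            Sum.inr_ne_inl (hfbij.1 h)
          rw [hflr] at hne ⊢
          rw [if_neg hne, hpg, zero_mul, mul_zero, sub_zero,
            Matrix.fromBlocks_apply₂₁, Matrix.zero_apply]
        · rw [hflr, hflr, hpg, zero_mul, mul_zero, sub_zero, Matrix.fromBlocks_apply₂₂,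
            Matrix.diagonal_apply]
          by_cases hkl : k = l
          · subst hkl; rw [if_pos (rfl : g k = g k), if_pos (rfl : k = k)]
          · rw [if_neg (fun h => hkl (ginj h)), if_neg hkl]
    -- charpoly via block decomposition
    have hchar2 : Θ.charpoly = A2.charpoly *
        (Matrix.diagonal (fun k : Fin (N - 2) => (lam (g k) : ℂ))).charpoly := by
      rw [← Matrix.charpoly_reindex e.symm Θ, hre, Matrix.charpoly_fromBlocks_zero₁₂]
    have hsc : ((r₁ : ℝ) : ℂ) + ((r₂ : ℝ) : ℂ) = ((a : ℝ) : ℂ) + ((d : ℝ) : ℂ) := by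
      exact_mod_cast hr₁₂sum
    have hpc : ((r₁ : ℝ) : ℂ) * ((r₂ : ℝ) : ℂ) =
        ((a : ℝ) : ℂ) * ((d : ℝ) : ℂ) - ((b : ℝ) : ℂ) * ((b : ℝ) : ℂ) := by
      have h' : r₁ * r₂ = a * d - b * b := by rw [hr₁₂prod]; ring
      exact_mod_cast h'
    have hA2charpoly : A2.charpoly =
        (Polynomial.X - Polynomial.C ((r₁ : ℝ) : ℂ)) *
          (Polynomial.X - Polynomial.C ((r₂ : ℝ) : ℂ)) := by
      rw [Matrix.charpoly, Matrix.det_fin_two, Matrix.charmatrix_apply_eq,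
        Matrix.charmatrix_apply_eq,
        Matrix.charmatrix_apply_ne _ _ _ (by decide : (0 : Fin 2) ≠ 1),
        Matrix.charmatrix_apply_ne _ _ _ (by decide : (1 : Fin 2) ≠ 0),
        hA200, hA211, hA201, hA210]
      have e1 : Polynomial.C ((a : ℝ) : ℂ) + Polynomial.C ((d : ℝ) : ℂ) =
          Polynomial.C ((r₁ : ℝ) : ℂ) + Polynomial.C ((r₂ : ℝ) : ℂ) := by
        rw [← Polynomial.C_add, ← Polynomial.C_add, hsc]
      have e2 : Polynomial.C ((a : ℝ) : ℂ) * Polynomial.C ((d : ℝ) : ℂ) -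
          Polynomial.C ((b : ℝ) : ℂ) * Polynomial.C ((b : ℝ) : ℂ) =
          Polynomial.C ((r₁ : ℝ) : ℂ) * Polynomial.C ((r₂ : ℝ) : ℂ) := by
        rw [← Polynomial.C_mul, ← Polynomial.C_mul, ← Polynomial.C_mul, ← Polynomial.C_sub, hpc]
      rw [Complex.ofReal_neg, map_neg]
      linear_combination (-(Polynomial.X : Polynomial ℂ)) * e1 + e2
    have hcp2 : Θ.charpoly =
        ∏ i, (Polynomial.X - Polynomial.C ((hΘ.eigenvalues i : ℝ) : ℂ)) := by
      conv_lhs => rw [hΘ.spectral_theorem]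
      rw [Unitary.conjStarAlgAut_apply, my_charpoly_unitary_conj, my_charpoly_diagonal]
      rfl
    have h1 : (Multiset.map (fun z : ℂ => Polynomial.X - Polynomial.C z)
        (Multiset.map (fun i : Fin N => ((hΘ.eigenvalues i : ℝ) : ℂ))
          Finset.univ.val)).prod = Θ.charpoly := by
      rw [hcp2, Multiset.map_map, Finset.prod_eq_multiset_prod]
      rfl
    have h2 : (Multiset.map (fun z : ℂ => Polynomial.X - Polynomial.C z)
        (((r₁ : ℝ) : ℂ) ::ₘ ((r₂ : ℝ) : ℂ) ::ₘ
          Multiset.map (fun k : Fin (N - 2) => ((lam (g k) : ℝ) : ℂ))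
            Finset.univ.val)).prod = Θ.charpoly := by
      rw [Multiset.map_cons, Multiset.map_cons, Multiset.prod_cons, Multiset.prod_cons,
        Multiset.map_map, hchar2, hA2charpoly, my_charpoly_diagonal,
        Finset.prod_eq_multiset_prod]
      rw [← mul_assoc]
      rfl
    have hmult : (Multiset.map (fun i : Fin N => ((hΘ.eigenvalues i : ℝ) : ℂ))
        Finset.univ.val) =
        ((r₁ : ℝ) : ℂ) ::ₘ ((r₂ : ℝ) : ℂ) ::ₘ
          Multiset.map (fun k : Fin (N - 2) => ((lam (g k) : ℝ) : ℂ)) Finset.univ.val := by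
      have h3 := congrArg Polynomial.roots (h1.trans h2.symm)
      rwa [Polynomial.roots_multiset_prod_X_sub_C,
        Polynomial.roots_multiset_prod_X_sub_C] at h3
    have hfilterfs : (Finset.univ.filter fun i : Fin N => 0 < (i : ℕ) ∧ (i : ℕ) < N - 1) =
        Finset.univ.map ⟨g, ginj⟩ := by
      ext i
      simp only [Finset.mem_filter, Finset.mem_map, Finset.mem_univ, true_and,
        Function.Embedding.coeFn_mk]
      constructor
      · rintro ⟨h1', h2'⟩
        refine ⟨⟨(i : ℕ) - 1, by omega⟩, ?_⟩
        apply Fin.ext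
        show (i : ℕ) - 1 + 1 = (i : ℕ)
        omega
      · rintro ⟨k, rfl⟩
        have hk2 := k.2
        refine ⟨?_, ?_⟩
        · show 0 < (k : ℕ) + 1
          omega
        · show (k : ℕ) + 1 < N - 1
          omega
    have hval : ((Finset.univ.filter fun i : Fin N =>
        0 < (i : ℕ) ∧ (i : ℕ) < N - 1)).val = Multiset.map g Finset.univ.val := by
      rw [hfilterfs, Finset.map_val]
      rfl
    apply Multiset.map_injective Complex.ofReal_injective
    rw [Multiset.map_map, Multiset.map_cons, Multiset.map_cons, Multiset.map_map, hval,
      Multiset.map_map]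
    exact hmult
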